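/- Let M be a finitely generated 𝔖-module such that (i) the torsion submodule of M is killed by p^N for some N ∈ ℕ, and (ii) the quotient M/uM is p-torsion free (for x ∈ M/uM, p·x = 0 implies x = 0). Then M is a free 𝔖-module. (This is the module-theoretic content of Remark 3.6: if the crystalline cohomology H^i_cris(X_0/W) is torsion free, then the Breuil–Kisin prismatic cohomology H^i_Δ(X/𝔖) is a free 𝔖-module.) -/

import Mathlib

open PowerSeries

/-- **Remark 3.6 (finite free follows from crystalline torsion free), module-theoretic content.**
Let `M` be a finitely generated `𝔖`-module (`𝔖 = W(k)⟦u⟧`) whose torsion submodule is killed by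
`p^N` for some `N`, and such that `M/uM` is `p`-torsion free.  Then `M` is a free `𝔖`-module. -/
theorem stmt8 (p : ℕ) [Fact p.Prime] (k : Type*) [Field k] [CharP k p] [PerfectField k]
    (M : Type*) [AddCommGroup M] [Module (PowerSeries (WittVector p k)) M]
    [Module.Finite (PowerSeries (WittVector p k)) M]
    (N : ℕ)
    (htor : ∀ x : M, (∃ f : PowerSeries (WittVector p k), f ≠ 0 ∧ f • x = 0) →
      ((p : PowerSeries (WittVector p k)) ^ N) • x = 0)
    (hquot : ∀ x : M,
      (∃ y : M, (p : PowerSeries (WittVector p k)) • x =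
        (PowerSeries.X : PowerSeries (WittVector p k)) • y) →
      ∃ y : M, x = (PowerSeries.X : PowerSeries (WittVector p k)) • y) :
    Module.Free (PowerSeries (WittVector p k)) M := by
  classical
  haveI : ExpChar k p := ExpChar.prime Fact.out
  haveI : PerfectRing k p := PerfectField.toPerfectRing p
  haveI hDVR : IsDiscreteValuationRing (WittVector p k) := WittVector.isDiscreteValuationRing
  haveI := hDVR.toIsPrincipalIdealRing
  haveI := hDVR.toIsLocalRing
  -- p-power descent along `hquot`
  have desc : ∀ (j : ℕ) (x : M), ((p : PowerSeries (WittVector p k)) ^ j) • x = 0 →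
      ∃ y : M, x = (X : PowerSeries (WittVector p k)) • y := by
    intro j
    induction j with
    | zero =>
        intro x hx
        rw [pow_zero, one_smul] at hx
        exact ⟨0, by rw [hx, smul_zero]⟩
    | succ j ih =>
        intro x hx
        apply hquot
        apply ih
        rw [smul_smul, ← pow_succ]
        exact hx
  -- the submodule `X • M` and the quotient `Q = M / XM`
  set NX : Submodule (PowerSeries (WittVector p k)) M :=
    LinearMap.range (LinearMap.lsmul (PowerSeries (WittVector p k)) M X) with hNXdef
  letI : Module (WittVector p k) (M ⧸ NX) :=
    Module.compHom (M ⧸ NX) ((C (R := WittVector p k)))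
  have hws : ∀ (c : WittVector p k) (q : M ⧸ NX), c • q = ((C (R := WittVector p k)) c) • q :=
    fun _ _ => rfl
  have hconst : ∀ (r : PowerSeries (WittVector p k)) (q : M ⧸ NX),
      r • q = ((constantCoeff (R := WittVector p k)) r) • q := by
    intro r q
    obtain ⟨m, rfl⟩ := NX.mkQ_surjective q
    rw [hws]
    rw [Submodule.mkQ_apply, ← Submodule.Quotient.mk_smul, ← Submodule.Quotient.mk_smul]
    rw [Submodule.Quotient.eq]
    obtain ⟨s, hs⟩ : (X : PowerSeries (WittVector p k)) ∣
        (r - (C (R := WittVector p k)) ((constantCoeff (R := WittVector p k)) r)) := by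
      rw [X_dvd_iff, map_sub, constantCoeff_C, sub_self]
    exact ⟨s • m, by rw [LinearMap.lsmul_apply, smul_smul, ← hs, sub_smul]⟩
  -- `Q` is finitely generated over `W(k)`
  haveI hfinQ : Module.Finite (WittVector p k) (M ⧸ NX) := by
    obtain ⟨s, hs⟩ :=
      (Module.finite_def.mp ‹Module.Finite (PowerSeries (WittVector p k)) M›)
    refine ⟨⟨s.image NX.mkQ, ?_⟩⟩
    rw [eq_top_iff]
    rintro q -
    obtain ⟨m, rfl⟩ := NX.mkQ_surjective q
    have hm : m ∈ Submodule.span (PowerSeries (WittVector p k)) (s : Set M) := by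
      rw [hs]; trivial
    refine Submodule.span_induction (p := fun m _ =>
        NX.mkQ m ∈ Submodule.span (WittVector p k) ((s.image NX.mkQ : Finset (M ⧸ NX)) : Set (M ⧸ NX)))
      ?_ ?_ ?_ ?_ hm
    · intro z hz
      exact Submodule.subset_span (by simpa using ⟨z, hz, rfl⟩)
    · simpa using Submodule.zero_mem _
    · intro a c _ _ ha hc
      rw [map_add]; exact Submodule.add_mem _ ha hc
    · intro r a _ ha
      rw [map_smul, hconst]
      exact Submodule.smul_mem _ _ ha
  -- `Q` is torsion free over `W(k)`
  haveI : NoZeroSMulDivisors (WittVector p k) (M ⧸ NX) := by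
    refine ⟨fun {c q} hcq => ?_⟩
    by_cases hc : c = 0
    · exact Or.inl hc
    refine Or.inr ?_
    obtain ⟨m, b, hb⟩ := WittVector.exists_eq_pow_p_mul' c hc
    have hstrip : ∀ (j : ℕ) (q' : M ⧸ NX),
        ((p : PowerSeries (WittVector p k)) ^ j) • q' = 0 → q' = 0 := by
      intro j
      induction j with
      | zero => intro q' h; simpa using h
      | succ j ih =>
          intro q' h
          have h1 : ((p : PowerSeries (WittVector p k)) ^ j) •
              ((p : PowerSeries (WittVector p k)) • q') = 0 := by
            rw [smul_smul, ← pow_succ]; exact h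
          have h2 := ih _ h1
          obtain ⟨z, rfl⟩ := NX.mkQ_surjective q'
          rw [← map_smul, Submodule.mkQ_apply, Submodule.Quotient.mk_eq_zero] at h2
          obtain ⟨y, hy⟩ := h2
          obtain ⟨w, hw⟩ := hquot z ⟨y, by rw [← hy, LinearMap.lsmul_apply]⟩
          rw [Submodule.mkQ_apply, Submodule.Quotient.mk_eq_zero, hw]
          exact ⟨w, rfl⟩
    have hbq : ((b : WittVector p k)) • q = 0 := by
      refine hstrip m _ ?_
      rw [hws, smul_smul]
      have hCc : ((p : PowerSeries (WittVector p k)) ^ m) *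
          ((C (R := WittVector p k)) (b : WittVector p k)) = (C (R := WittVector p k)) c := by
        rw [hb, map_mul, map_pow, map_natCast]
      rw [hCc, ← hws, hcq]
    calc q = ((1 : WittVector p k)) • q := (one_smul _ _).symm
      _ = (((b⁻¹ : (WittVector p k)ˣ) : WittVector p k) * (b : WittVector p k)) • q := by
          rw [Units.inv_mul]
      _ = ((b⁻¹ : (WittVector p k)ˣ) : WittVector p k) • (((b : WittVector p k)) • q) := by
          rw [mul_smul]
      _ = 0 := by rw [hbq, smul_zero]
  -- `Q` is free over the DVR `W(k)`; choose a basis and lift it to `M`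
  haveI hfreeQ : Module.Free (WittVector p k) (M ⧸ NX) :=
    Module.free_of_finite_type_torsion_free'
  set ι := Module.Free.ChooseBasisIndex (WittVector p k) (M ⧸ NX) with hι
  set b : Module.Basis ι (WittVector p k) (M ⧸ NX) :=
    Module.Free.chooseBasis (WittVector p k) (M ⧸ NX) with hbasis
  have hlift : ∀ i : ι, ∃ m : M, NX.mkQ m = b i := fun i => NX.mkQ_surjective (b i)
  choose x hx using hlift
  -- the lifts generate `M` (Nakayama)
  have hXnonunit : (X : PowerSeries (WittVector p k)) ∈
      IsLocalRing.maximalIdeal (PowerSeries (WittVector p k)) := by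
    rw [IsLocalRing.mem_maximalIdeal, mem_nonunits_iff]
    intro h
    have h2 := h.map ((constantCoeff (R := WittVector p k)))
    rw [constantCoeff_X] at h2
    exact not_isUnit_zero h2
  have hspan : Submodule.span (PowerSeries (WittVector p k)) (Set.range x) = ⊤ := by
    set S : Submodule (PowerSeries (WittVector p k)) M :=
      Submodule.span (PowerSeries (WittVector p k)) (Set.range x) with hSdef
    haveI : Module.Finite (PowerSeries (WittVector p k)) (M ⧸ S) :=
      Module.Finite.of_surjective S.mkQ S.mkQ_surjective
    have hle : (⊤ : Submodule (PowerSeries (WittVector p k)) (M ⧸ S)) ≤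
        (Ideal.span {(X : PowerSeries (WittVector p k))}) • ⊤ := by
      rintro q -
      obtain ⟨m, rfl⟩ := S.mkQ_surjective q
      have h1 : NX.mkQ (Finset.univ.sum fun i =>
          ((C (R := WittVector p k)) (b.repr (NX.mkQ m) i)) • x i) = NX.mkQ m := by
        rw [map_sum]
        have : ∀ i : ι, NX.mkQ (((C (R := WittVector p k)) (b.repr (NX.mkQ m) i)) • x i) =
            (b.repr (NX.mkQ m) i) • b i := by
          intro i
          rw [map_smul, hx, ← hws]
        rw [Finset.sum_congr rfl (fun i _ => this i)]
        exact b.sum_repr _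
      have h2 : m - (Finset.univ.sum fun i =>
          ((C (R := WittVector p k)) (b.repr (NX.mkQ m) i)) • x i) ∈ NX := by
        have : NX.mkQ (m - Finset.univ.sum fun i =>
            ((C (R := WittVector p k)) (b.repr (NX.mkQ m) i)) • x i) = 0 := by
          rw [map_sub, h1, sub_self]
        rwa [Submodule.mkQ_apply, Submodule.Quotient.mk_eq_zero] at this
      obtain ⟨y, hy⟩ := h2
      rw [LinearMap.lsmul_apply] at hy
      have hmS : S.mkQ m = (X : PowerSeries (WittVector p k)) • S.mkQ y := by
        have hm : m = (Finset.univ.sum fun i =>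
            ((C (R := WittVector p k)) (b.repr (NX.mkQ m) i)) • x i) +
            (X : PowerSeries (WittVector p k)) • y := by
          rw [hy]; abel
        rw [hm, map_add, map_smul]
        have hsum : S.mkQ (Finset.univ.sum fun i =>
            ((C (R := WittVector p k)) (b.repr (NX.mkQ m) i)) • x i) = 0 := by
          rw [Submodule.mkQ_apply, Submodule.Quotient.mk_eq_zero]
          exact Submodule.sum_mem _ fun i _ =>
            Submodule.smul_mem _ _ (Submodule.subset_span ⟨i, rfl⟩)
        rw [hsum, zero_add]
      rw [hmS]
      exact Submodule.smul_mem_smul (Ideal.mem_span_singleton_self _) trivial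
    have hjac : (Ideal.span {(X : PowerSeries (WittVector p k))}) ≤
        Ideal.jacobson ⊥ := by
      rw [IsLocalRing.jacobson_eq_maximalIdeal ⊥ bot_ne_top]
      rw [Ideal.span_le, Set.singleton_subset_iff]
      exact hXnonunit
    have hbot := Submodule.eq_bot_of_le_smul_of_le_jacobson_bot
      (Ideal.span {(X : PowerSeries (WittVector p k))})
      (⊤ : Submodule (PowerSeries (WittVector p k)) (M ⧸ S))
      (Module.finite_def.mp inferInstance) hle hjac
    rw [eq_top_iff]
    intro m _
    have : S.mkQ m = 0 := by
      have : S.mkQ m ∈ (⊤ : Submodule (PowerSeries (WittVector p k)) (M ⧸ S)) := trivial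
      rw [hbot] at this
      simpa using this
    rwa [Submodule.mkQ_apply, Submodule.Quotient.mk_eq_zero] at this
  -- the lifts are linearly independent
  have hstep : ∀ (f : ι → PowerSeries (WittVector p k)),
      (∃ t : ℕ, ((X : PowerSeries (WittVector p k)) ^ t) •
        (Finset.univ.sum fun i => f i • x i) = 0) →
      ∃ g : ι → PowerSeries (WittVector p k), (∀ i, f i = X * g i) ∧
        (∃ t : ℕ, ((X : PowerSeries (WittVector p k)) ^ t) •
          (Finset.univ.sum fun i => g i • x i) = 0) := by
    rintro f ⟨t, ht⟩
    have hz : ((p : PowerSeries (WittVector p k)) ^ N) •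
        (Finset.univ.sum fun i => f i • x i) = 0 :=
      htor _ ⟨X ^ t, pow_ne_zero _ X_ne_zero, ht⟩
    obtain ⟨w, hw⟩ := desc N _ hz
    have hmk0 : NX.mkQ (Finset.univ.sum fun i => f i • x i) = 0 := by
      rw [hw, Submodule.mkQ_apply, Submodule.Quotient.mk_eq_zero]
      exact ⟨w, rfl⟩
    have hsum : (Finset.univ.sum fun i =>
        ((constantCoeff (R := WittVector p k)) (f i)) • b i) = 0 := by
      rw [← hmk0, map_sum]
      refine Finset.sum_congr rfl fun i _ => ?_
      rw [map_smul, hx, hconst]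
    have hco : ∀ i, (constantCoeff (R := WittVector p k)) (f i) = 0 :=
      Fintype.linearIndependent_iff.mp b.linearIndependent _ hsum
    have hdvd : ∀ i, (X : PowerSeries (WittVector p k)) ∣ f i :=
      fun i => X_dvd_iff.mpr (hco i)
    choose g hg using hdvd
    refine ⟨g, hg, t + 1, ?_⟩
    have hXg : (X : PowerSeries (WittVector p k)) •
        (Finset.univ.sum fun i => g i • x i) =
        Finset.univ.sum fun i => f i • x i := by
      rw [Finset.smul_sum]
      refine Finset.sum_congr rfl fun i _ => ?_
      rw [smul_smul, ← hg i]
    rw [pow_succ, mul_smul, hXg, ht]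
  have hdiv : ∀ (m : ℕ) (f : ι → PowerSeries (WittVector p k)),
      (∃ t : ℕ, ((X : PowerSeries (WittVector p k)) ^ t) •
        (Finset.univ.sum fun i => f i • x i) = 0) →
      ∀ i, ((X : PowerSeries (WittVector p k)) ^ m) ∣ f i := by
    intro m
    induction m with
    | zero => intro f _ i; simpa using one_dvd _
    | succ m ih =>
        intro f hf i
        obtain ⟨g, hg, hgt⟩ := hstep f hf
        rw [hg i, pow_succ']
        exact mul_dvd_mul_left _ (ih g hgt i)
  have hli : LinearIndependent (PowerSeries (WittVector p k)) x := by
    rw [Fintype.linearIndependent_iff]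
    intro f hf i
    have h0 : ∀ m : ℕ, ((X : PowerSeries (WittVector p k)) ^ m) ∣ f i :=
      fun m => hdiv m f ⟨0, by rw [pow_zero, one_smul, hf]⟩ i
    refine PowerSeries.ext fun n => ?_
    rw [map_zero]
    exact X_pow_dvd_iff.mp (h0 (n + 1)) n (lt_add_one n)
  exact Module.Free.of_basis (Module.Basis.mk hli (by rw [hspan]))
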